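/- arXiv:1310.4565 — 2 statements merged into one kernel-verified Lean document; each statement's English description precedes it below -/
import Mathlib

section
/- The pair (α_n, β_n) with α_0 = 1, α_{2n} = (−1)^n q^{n(3n−1)}(1+q^{2n}) for n ≥ 1, α_{2n+1} = 0, and β_n = 1/((q;q)_n (q;q²)_n) is a Bailey pair relative to a = 1; that is, β_n = ∑_{r=0}^{n} α_r / ((q;q)_{n+r} (q;q)_{n−r}) for all n ≥ 0. -/
open Finset PowerSeries
open scoped Classical

noncomputable section

/-- Sum of positive divisors of `n` (`0` if `n = 0`). -/
def sigma (n : ℕ) : ℕ := ∑ d ∈ n.divisors, d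

/-- Number of partitions of `n`. -/
def p (n : ℕ) : ℕ := Fintype.card (Nat.Partition n)

/-- Smallest part of a partition (junk value `0` for the empty partition). -/
def sPart {n : ℕ} (π : Nat.Partition n) : ℕ := sInf {a | a ∈ π.parts}

/-- Rank of a partition: largest part minus number of parts. -/
def rank {n : ℕ} (π : Nat.Partition n) : ℤ :=
  (π.parts.sup : ℤ) - (Multiset.card π.parts : ℤ)

/-- Number of partitions of `n` with rank `m`. -/
def N (m : ℤ) (n : ℕ) : ℕ := Nat.card {π : Nat.Partition n // rank π = m}

/-- Second rank moment `N₂(n) = ∑_m m² N(m,n)` (the rank lies in `[-n, n]`). -/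
def N2 (n : ℕ) : ℤ := ∑ m ∈ Finset.Icc (-(n : ℤ)) (n : ℤ), m ^ 2 * N m n

/-- The Andrews–Garvan crank of a partition. -/
def crank {n : ℕ} (π : Nat.Partition n) : ℤ :=
  if π.parts.count 1 = 0 then (π.parts.sup : ℤ)
  else (Multiset.card (π.parts.filter fun a => π.parts.count 1 < a) : ℤ)
    - (π.parts.count 1 : ℤ)

/-- `M(m,n)`: number of partitions of `n` with crank `m`, with the
Andrews–Garvan correction at `n = 1`. -/
def M (m : ℤ) (n : ℕ) : ℤ :=
  if n = 1 then (if m = 0 then -1 else if m = 1 ∨ m = -1 then 1 else 0)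
  else (Nat.card {π : Nat.Partition n // crank π = m} : ℤ)

/-- Second crank moment `M₂(n) = ∑_m m² M(m,n)` (the crank lies in `[-n, n]`). -/
def M2 (n : ℕ) : ℤ := ∑ m ∈ Finset.Icc (-(n : ℤ)) (n : ℤ), m ^ 2 * M m n

/-- `spt(n)`: total number of appearances of the smallest part over all
partitions of `n`. -/
def spt (n : ℕ) : ℕ := ∑ π : Nat.Partition n, π.parts.count (sPart π)

/-- `spt_o⁺(n)`: total number of appearances of the smallest part over all
partitions `π` of `n` in which no odd part greater than `2 s(π)` occurs. -/
def sptoPlus (n : ℕ) : ℕ :=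
  ∑ π : Nat.Partition n,
    if ∀ a ∈ π.parts, Odd a → a ≤ 2 * sPart π then π.parts.count (sPart π) else 0

/-- `spt_o⁻(n)`: total number of appearances of `s(π)` over all partition pairs
`(π, δ_{s(π)})` of total size `n` (i.e. `|π| + s(π)(s(π)-1)/2 = n`), where `π`
has no odd part greater than `2 s(π)`. -/
def sptoMinus (n : ℕ) : ℕ :=
  ∑ m ∈ Finset.range (n + 1), ∑ π : Nat.Partition m,
    if m + sPart π * (sPart π - 1) / 2 = n ∧
        (∀ a ∈ π.parts, Odd a → a ≤ 2 * sPart π)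
      then π.parts.count (sPart π) else 0

/-- `spt_o(n) = spt_o⁺(n) − spt_o⁻(n)`. -/
def spto (n : ℕ) : ℤ := (sptoPlus n : ℤ) - (sptoMinus n : ℤ)

/-- `(q; q)_k = ∏_{j=1}^{k} (1 - q^j)`. -/
def pq (k : ℕ) : PowerSeries ℚ :=
  ∏ j ∈ Finset.range k, (1 - (PowerSeries.X : PowerSeries ℚ) ^ (j + 1))

/-- `(q; q²)_k = ∏_{j=0}^{k-1} (1 - q^{2j+1})`. -/
def pq2 (k : ℕ) : PowerSeries ℚ :=
  ∏ j ∈ Finset.range k, (1 - (PowerSeries.X : PowerSeries ℚ) ^ (2 * j + 1))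

/-- `(α, β)` is a Bailey pair relative to `a = 1`:
`β_n = ∑_{r=0}^{n} α_r / ((q;q)_{n+r} (q;q)_{n-r})`. -/
def IsBaileyPair (α β : ℕ → PowerSeries ℚ) : Prop :=
  ∀ n : ℕ, β n = ∑ r ∈ Finset.range (n + 1), α r * (pq (n + r) * pq (n - r))⁻¹

abbrev R := PowerSeries ℚ

lemma constCoeff_one_sub_pow (m : ℕ) (hm : m ≠ 0) :
    constantCoeff (1 - (PowerSeries.X : R) ^ m) = 1 := by
  simp [map_sub, map_pow, constantCoeff_X, zero_pow hm]

lemma pq_const (k : ℕ) : constantCoeff (pq k) = 1 := by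
  rw [pq, map_prod, Finset.prod_eq_one]
  intro j _
  exact constCoeff_one_sub_pow (j+1) (Nat.succ_ne_zero j)

lemma pq_ne (k : ℕ) : constantCoeff (pq k) ≠ 0 := by simp [pq_const]

lemma pq_mul_inv (k : ℕ) : pq k * (pq k)⁻¹ = 1 :=
  PowerSeries.mul_inv_cancel _ (pq_ne k)

lemma pq_inv_mul (k : ℕ) : (pq k)⁻¹ * pq k = 1 := by
  rw [mul_comm]; exact pq_mul_inv k

lemma pq_succ (k : ℕ) : pq (k+1) = pq k * (1 - (PowerSeries.X : R) ^ (k+1)) := by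
  rw [pq, pq, Finset.prod_range_succ]

lemma pq_zero : pq 0 = 1 := by simp [pq]

lemma osp_mul_inv (m : ℕ) (hm : m ≠ 0) :
    (1 - (PowerSeries.X : R) ^ m) * (1 - (PowerSeries.X : R) ^ m)⁻¹ = 1 :=
  PowerSeries.mul_inv_cancel _ (by simp [constCoeff_one_sub_pow m hm])


lemma pq_inv_grow_right (c d : ℕ) :
    (pq c * pq d)⁻¹ = (1 - (PowerSeries.X : R) ^ (d+1)) * (pq c * pq (d+1))⁻¹ := by
  rw [pq_succ d, PowerSeries.mul_inv_rev, PowerSeries.mul_inv_rev, PowerSeries.mul_inv_rev,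
      ← mul_assoc, ← mul_assoc, osp_mul_inv _ (Nat.succ_ne_zero d), one_mul]

lemma pq_inv_grow_left (c d : ℕ) :
    (pq c * pq d)⁻¹ = (1 - (PowerSeries.X : R) ^ (c+1)) * (pq (c+1) * pq d)⁻¹ := by
  rw [mul_comm (pq c), mul_comm (pq (c+1))]; exact pq_inv_grow_right d c

/-- monomial with integer (junk for negative) exponent -/
def xq (m : ℤ) : R := (PowerSeries.X : R) ^ m.toNat

/-- Gaussian binomial as a power series, with zero outside range. -/
def gg (N : ℕ) (k : ℤ) : R :=
  if 0 ≤ k ∧ k ≤ N then pq N * (pq k.toNat * pq (N - k.toNat))⁻¹ else 0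

lemma gg_out {N : ℕ} {k : ℤ} (h : ¬(0 ≤ k ∧ k ≤ N)) : gg N k = 0 := if_neg h

lemma gg_in {N : ℕ} {k : ℤ} (h1 : 0 ≤ k) (h2 : k ≤ N) :
    gg N k = pq N * (pq k.toNat * pq (N - k.toNat))⁻¹ := if_pos ⟨h1, h2⟩

lemma gg_symm (N : ℕ) (k : ℤ) : gg N k = gg N ((N : ℤ) - k) := by
  by_cases h : 0 ≤ k ∧ k ≤ N
  · obtain ⟨h1, h2⟩ := h
    rw [gg_in h1 h2, gg_in (by omega) (by omega)]
    have ha : ((N : ℤ) - k).toNat = N - k.toNat := by omega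
    rw [ha]
    have hb : N - (N - k.toNat) = k.toNat := by omega
    rw [hb, mul_comm (pq (N - k.toNat))]
  · rw [gg_out h, gg_out (by omega)]

lemma gg_zero_col (N : ℕ) : gg N 0 = 1 := by
  rw [gg_in le_rfl (by exact_mod_cast Nat.zero_le N)]
  simp [pq_zero, pq_mul_inv]

lemma gg_top (N : ℕ) : gg N (N : ℤ) = 1 := by
  rw [gg_symm]; simp [gg_zero_col]

lemma gg_pascal (N : ℕ) (k : ℤ) :
    gg (N+1) k = gg N k + xq ((N:ℤ) + 1 - k) * gg N (k-1) := by
  rcases lt_trichotomy k 0 with hk | hk | hk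
  · rw [gg_out (by omega), gg_out (by omega), gg_out (by omega), mul_zero, add_zero]
  · subst hk
    rw [gg_zero_col, gg_zero_col, gg_out (by omega), mul_zero, add_zero]
  · -- 1 ≤ k
    by_cases hkN : k ≤ N
    · -- main case
      set a := k.toNat with ha
      have hak : (a : ℤ) = k := Int.toNat_of_nonneg (by omega)
      have ha1 : 1 ≤ a := by omega
      have haN : a ≤ N := by omega
      rw [gg_in (by omega) (by push_cast; omega),
          gg_in (by omega) (by omega), gg_in (by omega) (by omega)]
      have e1 : (N + 1) - k.toNat = (N - a) + 1 := by omega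
      have e2 : (k-1).toNat = a - 1 := by omega
      have e3 : N - (a - 1) = (N - a) + 1 := by omega
      have e4 : ((N:ℤ) + 1 - k).toNat = (N - a) + 1 := by omega
      rw [e1, e2, e3, xq, e4, pq_succ N]
      rw [pq_inv_grow_right a (N - a)]
      rw [pq_inv_grow_left (a-1) (N - a + 1)]
      rw [show (a - 1) + 1 = a by omega]
      have hst : (PowerSeries.X : R) ^ (N - a + 1) * (PowerSeries.X : R) ^ a
          = (PowerSeries.X : R) ^ (N + 1) := by
        rw [← pow_add]; congr 1; omega
      have key : (1 - (PowerSeries.X : R) ^ (N+1)) =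
          (1 - (PowerSeries.X : R) ^ (N - a + 1)) +
          (PowerSeries.X : R) ^ (N - a + 1) * (1 - (PowerSeries.X : R) ^ a) := by
        rw [← hst]; ring
      rw [key]
      ring
    · -- k > N
      by_cases hk1 : k = (N : ℤ) + 1
      · subst hk1
        have t1 : gg (N+1) ((N:ℤ)+1) = 1 := by
          rw [show ((N:ℤ)+1) = ((N+1:ℕ):ℤ) by push_cast; ring]; exact gg_top _
        have t2 : gg N ((N:ℤ)+1-1) = 1 := by
          rw [show (N:ℤ)+1-1 = (N:ℤ) by ring]; exact gg_top _
        rw [t1, t2, gg_out (show ¬(0 ≤ (N:ℤ)+1 ∧ (N:ℤ)+1 ≤ N) by omega)]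
        rw [show (N:ℤ) + 1 - ((N:ℤ)+1) = 0 by ring]
        simp [xq]
      · rw [gg_out (by push_cast; omega), gg_out (by omega), gg_out (by omega),
            mul_zero, add_zero]

lemma gg_pascal' (N : ℕ) (k : ℤ) :
    gg (N+1) k = gg N (k-1) + xq k * gg N k := by
  have h := gg_pascal N ((N:ℤ) + 1 - k)
  rw [gg_symm (N+1) k]
  rw [show ((N+1:ℕ):ℤ) - k = (N:ℤ) + 1 - k by push_cast; ring]
  rw [h]
  rw [gg_symm N ((N:ℤ) + 1 - k), show (N:ℤ) - ((N:ℤ)+1-k) = k - 1 by ring]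
  rw [gg_symm N ((N:ℤ) + 1 - k - 1), show (N:ℤ) - ((N:ℤ)+1-k-1) = k by ring]
  rw [show (N:ℤ) + 1 - ((N:ℤ)+1-k) = k by ring]

/-- sign (-1)^j for integer j -/
def sg (j : ℤ) : R := if Even j then 1 else -1

lemma sg_neg (j : ℤ) : sg (-j) = sg j := by simp [sg, even_neg]

lemma sg_one_sub (j : ℤ) : sg (1 - j) = - sg j := by
  rcases Int.even_or_odd j with h | h
  · have h2 : ¬ Even (1 - j) := by
      rcases h with ⟨m, hm⟩; intro ⟨m2, hm2⟩; omega
    simp [sg, h, h2]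
  · have h1 : ¬ Even j := by rcases h with ⟨m, hm⟩; intro ⟨m2, hm2⟩; omega
    have h2 : Even (1 - j) := by rcases h with ⟨m, hm⟩; exact ⟨-m, by omega⟩
    simp [sg, h1, h2]

lemma sg_cast (m : ℕ) : sg (m : ℤ) = (-1 : R) ^ m := by
  rcases Nat.even_or_odd m with h | h
  · rw [h.neg_one_pow]; simp [sg, Int.even_coe_nat, h]
  · rw [h.neg_one_pow]
    have : ¬ Even (m : ℤ) := by rw [Int.even_coe_nat]; exact Nat.not_even_iff_odd.mpr h
    simp [sg, this]

def bb (j : ℤ) : R := sg j * xq (j * (3 * j - 1))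

lemma tri_nonneg (j : ℤ) : 0 ≤ j * (3 * j - 1) := by
  rcases le_or_gt j 0 with h | h
  · nlinarith
  · nlinarith

def Us (n : ℕ) : R := ∑ j ∈ Finset.Icc (-(n:ℤ)) (n:ℤ), bb j * gg (2*n) ((n:ℤ) - 2*j)

def Ws (n : ℕ) : R := ∑ j ∈ Finset.Icc (-(n:ℤ)) (n:ℤ), bb j * gg (2*n+1) ((n:ℤ) + 1 - 2*j)

lemma invol_term (n : ℕ) (j : ℤ) :
    bb j * (xq ((n:ℤ) + 1 - 2*j) * gg (2*n) ((n:ℤ) + 1 - 2*j)) +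
    bb (1-j) * (xq ((n:ℤ) + 1 - 2*(1-j)) * gg (2*n) ((n:ℤ) + 1 - 2*(1-j))) = 0 := by
  have hsym : gg (2*n) ((n:ℤ) + 1 - 2*(1-j)) = gg (2*n) ((n:ℤ) + 1 - 2*j) := by
    rw [gg_symm (2*n) ((n:ℤ) + 1 - 2*(1-j))]
    congr 1; push_cast; ring
  rw [hsym]
  by_cases h : 0 ≤ (n:ℤ) + 1 - 2*j ∧ (n:ℤ) + 1 - 2*j ≤ ((2*n : ℕ) : ℤ)
  · have hr : 0 ≤ (n:ℤ) + 1 - 2*j := h.1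
    have hl : 0 ≤ (n:ℤ) + 1 - 2*(1-j) := by push_cast at h; omega
    have hm : bb (1-j) * xq ((n:ℤ) + 1 - 2*(1-j)) = -(bb j * xq ((n:ℤ) + 1 - 2*j)) := by
      unfold bb
      rw [sg_one_sub]
      have e1 : xq ((1-j) * (3*(1-j) - 1)) * xq ((n:ℤ) + 1 - 2*(1-j))
          = xq (j * (3*j - 1)) * xq ((n:ℤ) + 1 - 2*j) := by
        unfold xq
        rw [← pow_add, ← pow_add]
        congr 1
        have t1 : (1-j) * (3*(1-j) - 1) = j * (3*j - 1) - 4*j + 2 := by ring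
        have t2 := tri_nonneg j
        have t3 := tri_nonneg (1-j)
        generalize hm1 : j * (3*j - 1) = m1 at *
        generalize hm2 : (1-j) * (3*(1-j) - 1) = m2 at *
        omega
      calc -sg j * xq ((1-j) * (3*(1-j) - 1)) * xq ((n:ℤ) + 1 - 2*(1-j))
          = -(sg j * (xq ((1-j) * (3*(1-j) - 1)) * xq ((n:ℤ) + 1 - 2*(1-j)))) := by ring
        _ = -(sg j * (xq (j * (3*j - 1)) * xq ((n:ℤ) + 1 - 2*j))) := by rw [e1]
        _ = -(sg j * xq (j * (3*j - 1)) * xq ((n:ℤ) + 1 - 2*j)) := by ring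
    calc bb j * (xq ((n:ℤ) + 1 - 2*j) * gg (2*n) ((n:ℤ) + 1 - 2*j)) +
          bb (1-j) * (xq ((n:ℤ) + 1 - 2*(1-j)) * gg (2*n) ((n:ℤ) + 1 - 2*j))
        = (bb j * xq ((n:ℤ) + 1 - 2*j) + bb (1-j) * xq ((n:ℤ) + 1 - 2*(1-j))) *
            gg (2*n) ((n:ℤ) + 1 - 2*j) := by ring
      _ = 0 := by rw [hm]; ring
  · rw [gg_out h]; ring

lemma step_i (n : ℕ) : Ws n = Us n := by
  unfold Ws Us
  have expand : ∀ j ∈ Finset.Icc (-(n:ℤ)) (n:ℤ),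
      bb j * gg (2*n+1) ((n:ℤ) + 1 - 2*j)
      = bb j * gg (2*n) ((n:ℤ) - 2*j)
        + bb j * (xq ((n:ℤ) + 1 - 2*j) * gg (2*n) ((n:ℤ) + 1 - 2*j)) := by
    intro j _
    rw [gg_pascal' (2*n) ((n:ℤ) + 1 - 2*j)]
    rw [show (n:ℤ) + 1 - 2*j - 1 = (n:ℤ) - 2*j by ring]
    ring
  rw [Finset.sum_congr rfl expand, Finset.sum_add_distrib]
  have hC : ∑ j ∈ Finset.Icc (-(n:ℤ)) (n:ℤ),
      bb j * (xq ((n:ℤ) + 1 - 2*j) * gg (2*n) ((n:ℤ) + 1 - 2*j)) = 0 := by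
    have hext : ∑ j ∈ Finset.Icc (-(n:ℤ)) (n:ℤ),
        bb j * (xq ((n:ℤ) + 1 - 2*j) * gg (2*n) ((n:ℤ) + 1 - 2*j))
        = ∑ j ∈ Finset.Icc (-(n:ℤ)) ((n:ℤ)+1),
        bb j * (xq ((n:ℤ) + 1 - 2*j) * gg (2*n) ((n:ℤ) + 1 - 2*j)) := by
      apply Finset.sum_subset
      · apply Finset.Icc_subset_Icc le_rfl; omega
      · intro j hj hnj
        simp only [Finset.mem_Icc] at hj hnj
        have hj1 : j = (n:ℤ) + 1 := by omega
        rw [gg_out (by push_cast; omega), mul_zero, mul_zero]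
    rw [hext]
    apply Finset.sum_involution (fun j _ => 1 - j)
    · intro j _; exact invol_term n j
    · intro j _ _; show (1:ℤ) - j ≠ j; omega
    · intro j _; show (1:ℤ) - (1 - j) = j; omega
    · intro j hj; simp only [Finset.mem_Icc] at hj ⊢; omega
  rw [hC, add_zero]

lemma step_ii (n : ℕ) :
    Us (n+1) = (1 + (PowerSeries.X : R)^(n+1)) * Ws n := by
  unfold Us Ws
  rw [show 2*(n+1) = (2*n+1)+1 by ring]
  have expand : ∀ j ∈ Finset.Icc (-((n+1:ℕ):ℤ)) ((n+1:ℕ):ℤ),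
      bb j * gg ((2*n+1)+1) (((n+1:ℕ):ℤ) - 2*j)
      = bb j * gg (2*n+1) ((n:ℤ) + 1 - 2*j)
        + bb j * (xq ((n:ℤ) + 1 + 2*j) * gg (2*n+1) ((n:ℤ) - 2*j)) := by
    intro j _
    rw [show ((n+1:ℕ):ℤ) - 2*j = (n:ℤ) + 1 - 2*j by push_cast; ring]
    rw [gg_pascal (2*n+1) ((n:ℤ) + 1 - 2*j)]
    rw [show ((2*n+1:ℕ):ℤ) + 1 - ((n:ℤ) + 1 - 2*j) = (n:ℤ) + 1 + 2*j by push_cast; ring]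
    rw [show (n:ℤ) + 1 - 2*j - 1 = (n:ℤ) - 2*j by ring]
    ring
  rw [Finset.sum_congr rfl expand, Finset.sum_add_distrib]
  have hA : ∑ j ∈ Finset.Icc (-((n+1:ℕ):ℤ)) ((n+1:ℕ):ℤ),
      bb j * gg (2*n+1) ((n:ℤ) + 1 - 2*j)
      = ∑ j ∈ Finset.Icc (-(n:ℤ)) (n:ℤ), bb j * gg (2*n+1) ((n:ℤ) + 1 - 2*j) := by
    symm
    apply Finset.sum_subset
    · apply Finset.Icc_subset_Icc <;> push_cast <;> omega
    · intro j hj hnj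
      simp only [Finset.mem_Icc] at hj hnj
      push_cast at hj
      have : j = (n:ℤ) + 1 ∨ j = -((n:ℤ)+1) := by omega
      rcases this with h | h <;>
        · rw [gg_out (by push_cast; omega), mul_zero]
  have hB : ∑ j ∈ Finset.Icc (-((n+1:ℕ):ℤ)) ((n+1:ℕ):ℤ),
      bb j * (xq ((n:ℤ) + 1 + 2*j) * gg (2*n+1) ((n:ℤ) - 2*j))
      = (PowerSeries.X : R)^(n+1) *
        ∑ j ∈ Finset.Icc (-(n:ℤ)) (n:ℤ), bb j * gg (2*n+1) ((n:ℤ) + 1 - 2*j) := by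
    rw [Finset.mul_sum]
    rw [show (Finset.Icc (-((n+1:ℕ):ℤ)) ((n+1:ℕ):ℤ)) = (Finset.Icc (-((n+1:ℕ):ℤ)) ((n+1:ℕ):ℤ)) from rfl]
    -- reindex j -> -j
    have hre : ∑ j ∈ Finset.Icc (-((n+1:ℕ):ℤ)) ((n+1:ℕ):ℤ),
        bb j * (xq ((n:ℤ) + 1 + 2*j) * gg (2*n+1) ((n:ℤ) - 2*j))
        = ∑ j ∈ Finset.Icc (-((n+1:ℕ):ℤ)) ((n+1:ℕ):ℤ),
        bb (-j) * (xq ((n:ℤ) + 1 - 2*j) * gg (2*n+1) ((n:ℤ) + 2*j)) := by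
      apply Finset.sum_nbij' (fun j => -j) (fun j => -j)
      · intro a ha; simp only [Finset.mem_Icc] at ha ⊢; omega
      · intro a ha; simp only [Finset.mem_Icc] at ha ⊢; omega
      · intro a _; ring
      · intro a _; ring
      · intro a _
        rw [neg_neg, show (n:ℤ) + 1 - 2*(-a) = (n:ℤ) + 1 + 2*a by ring,
           show (n:ℤ) + 2*(-a) = (n:ℤ) - 2*a by ring]
    rw [hre]
    have hshrink : ∑ j ∈ Finset.Icc (-((n+1:ℕ):ℤ)) ((n+1:ℕ):ℤ),
        bb (-j) * (xq ((n:ℤ) + 1 - 2*j) * gg (2*n+1) ((n:ℤ) + 2*j))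
        = ∑ j ∈ Finset.Icc (-(n:ℤ)) (n:ℤ),
        bb (-j) * (xq ((n:ℤ) + 1 - 2*j) * gg (2*n+1) ((n:ℤ) + 2*j)) := by
      symm
      apply Finset.sum_subset
      · apply Finset.Icc_subset_Icc <;> push_cast <;> omega
      · intro j hj hnj
        simp only [Finset.mem_Icc] at hj hnj
        push_cast at hj
        have : j = (n:ℤ) + 1 ∨ j = -((n:ℤ)+1) := by omega
        rcases this with h | h <;>
          · rw [gg_out (by push_cast; omega), mul_zero, mul_zero]
    rw [hshrink]
    apply Finset.sum_congr rfl
    intro j hj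
    simp only [Finset.mem_Icc] at hj
    have hsym : gg (2*n+1) ((n:ℤ) + 2*j) = gg (2*n+1) ((n:ℤ) + 1 - 2*j) := by
      rw [gg_symm (2*n+1) ((n:ℤ) + 2*j)]
      congr 1; push_cast; ring
    rw [hsym]
    by_cases h : 0 ≤ (n:ℤ) + 1 - 2*j ∧ (n:ℤ) + 1 - 2*j ≤ ((2*n+1 : ℕ) : ℤ)
    · have hr : 0 ≤ (n:ℤ) + 1 - 2*j := h.1
      have hmon : bb (-j) * xq ((n:ℤ) + 1 - 2*j)
          = (PowerSeries.X : R)^(n+1) * bb j := by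
        unfold bb
        rw [sg_neg]
        have e1 : xq ((-j) * (3*(-j) - 1)) * xq ((n:ℤ) + 1 - 2*j)
            = (PowerSeries.X : R)^(n+1) * xq (j * (3*j - 1)) := by
          unfold xq
          rw [← pow_add, ← pow_add]
          congr 1
          have t1 : (-j) * (3*(-j) - 1) = j * (3*j - 1) + 2*j := by ring
          have t2 := tri_nonneg j
          have t3 := tri_nonneg (-j)
          generalize hm1 : j * (3*j - 1) = m1 at t1 t2 ⊢
          generalize hm2 : (-j) * (3*(-j) - 1) = m2 at t1 t3 ⊢
          omega
        calc sg j * xq ((-j) * (3*(-j) - 1)) * xq ((n:ℤ) + 1 - 2*j)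
            = sg j * (xq ((-j) * (3*(-j) - 1)) * xq ((n:ℤ) + 1 - 2*j)) := by ring
          _ = sg j * ((PowerSeries.X : R)^(n+1) * xq (j * (3*j - 1))) := by rw [e1]
          _ = (PowerSeries.X : R)^(n+1) * (sg j * xq (j * (3*j - 1))) := by ring
      calc bb (-j) * (xq ((n:ℤ) + 1 - 2*j) * gg (2*n+1) ((n:ℤ) + 1 - 2*j))
          = (bb (-j) * xq ((n:ℤ) + 1 - 2*j)) * gg (2*n+1) ((n:ℤ) + 1 - 2*j) := by ring
        _ = ((PowerSeries.X : R)^(n+1) * bb j) * gg (2*n+1) ((n:ℤ) + 1 - 2*j) := by rw [hmon]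
        _ = (PowerSeries.X : R)^(n+1) * (bb j * gg (2*n+1) ((n:ℤ) + 1 - 2*j)) := by ring
    · rw [gg_out h]; ring
  rw [hA, hB]
  ring

lemma Us_zero : Us 0 = 1 := by
  unfold Us
  rw [show (Finset.Icc (-(0:ℕ):ℤ) ((0:ℕ):ℤ)) = {0} by rfl]
  rw [Finset.sum_singleton]
  have : bb 0 = 1 := by unfold bb sg xq; norm_num
  rw [this, one_mul]
  rw [show ((0:ℕ):ℤ) - 2*(0:ℤ) = 0 by ring]
  exact gg_zero_col 0

lemma Us_eq (n : ℕ) : Us n = ∏ i ∈ Finset.range n, (1 + (PowerSeries.X : R)^(i+1)) := by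
  induction n with
  | zero => simpa using Us_zero
  | succ n ih =>
      rw [step_ii, step_i, ih, Finset.prod_range_succ]
      ring

lemma pq2_const (k : ℕ) : constantCoeff (pq2 k) = 1 := by
  rw [pq2, map_prod, Finset.prod_eq_one]
  intro j _
  exact constCoeff_one_sub_pow (2*j+1) (by omega)

lemma pq2_succ (k : ℕ) :
    pq2 (k+1) = pq2 k * (1 - (PowerSeries.X : R) ^ (2*k+1)) := by
  rw [pq2, pq2, Finset.prod_range_succ]

lemma pq_two_mul (n : ℕ) :
    pq (2*n) = pq n * pq2 n * ∏ i ∈ Finset.range n, (1 + (PowerSeries.X : R)^(i+1)) := by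
  induction n with
  | zero => simp [pq, pq2]
  | succ n ih =>
      rw [show 2*(n+1) = (2*n+1)+1 by ring, pq_succ, show 2*n+1 = (2*n)+1 from rfl,
          pq_succ (2*n), ih, pq_succ n, pq2_succ n, Finset.prod_range_succ]
      have hx : (PowerSeries.X : R) ^ (2*n+1+1) = (PowerSeries.X : R)^(n+1) * (PowerSeries.X : R)^(n+1) := by
        rw [← pow_add]; congr 1; ring
      rw [show (2*n)+1 = 2*n+1 from rfl, hx]
      ring

lemma beta_eq (n : ℕ) :
    (pq n * pq2 n)⁻¹ = (pq (2*n))⁻¹ * ∏ i ∈ Finset.range n, (1 + (PowerSeries.X : R)^(i+1)) := by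
  symm
  rw [PowerSeries.eq_inv_iff_mul_eq_one (by
    rw [map_mul, pq_const, pq2_const]; norm_num)]
  calc (pq (2*n))⁻¹ * (∏ i ∈ Finset.range n, (1 + (PowerSeries.X : R)^(i+1))) * (pq n * pq2 n)
      = (pq (2*n))⁻¹ * (pq n * pq2 n * ∏ i ∈ Finset.range n, (1 + (PowerSeries.X : R)^(i+1))) := by
        ring
    _ = (pq (2*n))⁻¹ * pq (2*n) := by rw [← pq_two_mul]
    _ = 1 := pq_inv_mul (2*n)

def al (k : ℕ) : PowerSeries ℚ :=
  if k = 0 then 1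
  else if k % 2 = 1 then 0
  else (-1 : PowerSeries ℚ) ^ (k / 2) *
    (PowerSeries.X : PowerSeries ℚ) ^ ((k / 2) * (3 * (k / 2) - 1)) *
    (1 + (PowerSeries.X : PowerSeries ℚ) ^ k)

lemma al_gg_term (n jn : ℕ) (h1 : 1 ≤ jn) :
    al (2*jn) * gg (2*n) ((n:ℤ) - 2*(jn:ℤ))
    = bb (jn:ℤ) * gg (2*n) ((n:ℤ) - 2*(jn:ℤ))
      + bb (-(jn:ℤ)) * gg (2*n) ((n:ℤ) + 2*(jn:ℤ)) := by
  have hsym : gg (2*n) ((n:ℤ) + 2*(jn:ℤ)) = gg (2*n) ((n:ℤ) - 2*(jn:ℤ)) := by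
    rw [gg_symm (2*n) ((n:ℤ) + 2*(jn:ℤ))]
    congr 1; push_cast; ring
  rw [hsym]
  have hal : al (2*jn) = (-1 : R)^jn *
      (PowerSeries.X : R)^(jn * (3*jn - 1)) * (1 + (PowerSeries.X : R)^(2*jn)) := by
    unfold al
    rw [if_neg (by omega), if_neg (by omega)]
    have h2 : 2*jn/2 = jn := by omega
    rw [h2]
  have hbb : bb (jn:ℤ) = (-1 : R)^jn * (PowerSeries.X : R)^(jn * (3*jn - 1)) := by
    unfold bb
    rw [sg_cast]
    congr 1
    unfold xq
    congr 1
    have : (jn:ℤ) * (3*(jn:ℤ) - 1) = ((jn * (3*jn - 1) : ℕ) : ℤ) := by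
      push_cast [Nat.cast_sub (by omega : 1 ≤ 3*jn)]
      ring
    rw [this, Int.toNat_natCast]
  have hbbn : bb (-(jn:ℤ)) = (-1 : R)^jn *
      ((PowerSeries.X : R)^(jn * (3*jn - 1)) * (PowerSeries.X : R)^(2*jn)) := by
    unfold bb
    rw [sg_neg, sg_cast, ← pow_add]
    congr 1
    unfold xq
    congr 1
    have : (-(jn:ℤ)) * (3*(-(jn:ℤ)) - 1) = ((jn * (3*jn - 1) + 2*jn : ℕ) : ℤ) := by
      push_cast [Nat.cast_sub (by omega : 1 ≤ 3*jn)]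
      ring
    rw [this, Int.toNat_natCast]
  rw [hal, hbb, hbbn]
  ring

lemma al_sum (n : ℕ) :
    ∑ r ∈ Finset.range (n+1), al r * gg (2*n) ((n:ℤ) - r) = Us n := by
  have h1 : ∑ r ∈ Finset.range (n+1), al r * gg (2*n) ((n:ℤ) - r)
      = ∑ r ∈ Finset.range (2*n+1), al r * gg (2*n) ((n:ℤ) - r) := by
    apply Finset.sum_subset
    · apply Finset.range_subset_range.mpr; omega
    · intro r hr hnr
      simp only [Finset.mem_range] at hr hnr
      rw [gg_out (by push_cast; omega), mul_zero]
  have h2 : ∑ r ∈ Finset.range (2*n+1), al r * gg (2*n) ((n:ℤ) - r)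
      = ∑ r ∈ (Finset.range (n+1)).image (fun j => 2*j), al r * gg (2*n) ((n:ℤ) - r) := by
    symm
    apply Finset.sum_subset
    · intro r hr
      simp only [Finset.mem_image, Finset.mem_range] at hr ⊢
      obtain ⟨j, hj, rfl⟩ := hr; omega
    · intro r hr hnr
      simp only [Finset.mem_image, Finset.mem_range] at hr hnr
      have hodd : r % 2 = 1 := by
        rcases Nat.even_or_odd r with he | ho
        · exfalso; obtain ⟨m, hm⟩ := he; exact hnr ⟨m, by omega, by omega⟩
        · obtain ⟨m, hm⟩ := ho; omega
      have : al r = 0 := by unfold al; rw [if_neg (by omega), if_pos hodd]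
      rw [this, zero_mul]
  have h3 : ∑ r ∈ (Finset.range (n+1)).image (fun j => 2*j), al r * gg (2*n) ((n:ℤ) - r)
      = ∑ j ∈ Finset.range (n+1), al (2*j) * gg (2*n) ((n:ℤ) - 2*(j:ℤ)) := by
    rw [Finset.sum_image (by intro a _ b _ hab; simp only at hab; omega)]
    apply Finset.sum_congr rfl
    intro j _
    have hc : ((2*j : ℕ) : ℤ) = 2*(j:ℤ) := by push_cast; ring
    rw [hc]
  rw [h1, h2, h3]
  -- now decompose both sides at j = 0
  have hr0 : Finset.range (n+1) = insert 0 (Finset.Icc 1 n) := by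
    ext x; simp only [Finset.mem_range, Finset.mem_insert, Finset.mem_Icc]; omega
  have hz0 : Finset.Icc (0:ℤ) (n:ℤ) = insert 0 (Finset.Icc 1 (n:ℤ)) := by
    ext x; simp only [Finset.mem_insert, Finset.mem_Icc]; omega
  have husplit : Finset.Icc (-(n:ℤ)) (n:ℤ)
      = (Finset.Icc (1:ℤ) (n:ℤ)).image (fun j => -j) ∪ Finset.Icc (0:ℤ) (n:ℤ) := by
    ext x
    simp only [Finset.mem_union, Finset.mem_image, Finset.mem_Icc]
    constructor
    · intro hx
      rcases le_or_gt 0 x with h | h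
      · right; exact ⟨h, hx.2⟩
      · left; exact ⟨-x, ⟨by omega, by omega⟩, by ring⟩
    · rintro (⟨j, hj, rfl⟩ | hx) <;> omega
  have hdisj : Disjoint ((Finset.Icc (1:ℤ) (n:ℤ)).image (fun j => -j)) (Finset.Icc (0:ℤ) (n:ℤ)) := by
    rw [Finset.disjoint_left]
    rintro x hx hx2
    simp only [Finset.mem_image, Finset.mem_Icc] at hx hx2
    obtain ⟨j, hj, rfl⟩ := hx; omega
  rw [Us, husplit, Finset.sum_union hdisj,
      Finset.sum_image (by intro a _ b _ hab; simp only at hab; omega), hz0,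
      Finset.sum_insert (by simp), hr0,
      Finset.sum_insert (by simp)]
  have hb0 : bb 0 * gg (2*n) ((n:ℤ) - 2*0) = al (2*0) * gg (2*n) ((n:ℤ) - 2*((0:ℕ):ℤ)) := by
    have : bb 0 = 1 := by unfold bb sg xq; norm_num
    have h0 : al 0 = 1 := by unfold al; norm_num
    rw [this, show 2*0 = 0 from rfl, h0]
    norm_num
  rw [show al (2*0) * gg (2*n) ((n:ℤ) - 2*((0:ℕ):ℤ)) = bb 0 * gg (2*n) ((n:ℤ) - 2*0) from hb0.symm]
  have hmain : ∑ j ∈ Finset.Icc 1 n, al (2*j) * gg (2*n) ((n:ℤ) - 2*(j:ℤ))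
      = ∑ j ∈ Finset.Icc (1:ℤ) (n:ℤ), (bb (-j) * gg (2*n) ((n:ℤ) - 2*(-j))
        + bb j * gg (2*n) ((n:ℤ) - 2*j)) := by
    refine Finset.sum_nbij' (fun j => (j:ℤ)) (fun j => j.toNat) ?_ ?_ ?_ ?_ ?_
    · intro a ha; simp only [Finset.mem_Icc] at ha ⊢; omega
    · intro a ha; simp only [Finset.mem_Icc] at ha ⊢; omega
    · intro a _; simp
    · intro a ha; simp only [Finset.mem_Icc] at ha
      show ((a.toNat : ℕ) : ℤ) = a; omega
    · intro a ha
      simp only [Finset.mem_Icc] at ha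
      rw [al_gg_term n a ha.1]
      rw [show (n:ℤ) - 2*(-(a:ℤ)) = (n:ℤ) + 2*(a:ℤ) by ring]
      ring
  rw [hmain, Finset.sum_add_distrib]
  ring

theorem bailey_pair_C1' :
    ∀ n : ℕ, ((pq n * pq2 n)⁻¹ : PowerSeries ℚ)
      = ∑ r ∈ Finset.range (n + 1), al r * (pq (n + r) * pq (n - r))⁻¹ := by
  intro n
  have term : ∀ r ∈ Finset.range (n+1),
      al r * (pq (n + r) * pq (n - r))⁻¹
      = (pq (2*n))⁻¹ * (al r * gg (2*n) ((n:ℤ) - r)) := by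
    intro r hr
    simp only [Finset.mem_range] at hr
    have hrn : r ≤ n := by omega
    have hgg : gg (2*n) ((n:ℤ) - r) = pq (2*n) * (pq (n - r) * pq (n + r))⁻¹ := by
      rw [gg_in (by omega) (by omega)]
      rw [show ((n:ℤ) - r).toNat = n - r by omega, show 2*n - (n - r) = n + r by omega]
    rw [hgg]
    calc al r * (pq (n + r) * pq (n - r))⁻¹
        = al r * ((pq (2*n))⁻¹ * pq (2*n)) * (pq (n + r) * pq (n - r))⁻¹ := by
          rw [pq_inv_mul, mul_one]
      _ = (pq (2*n))⁻¹ * (al r * (pq (2*n) * (pq (n - r) * pq (n + r))⁻¹)) := by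
          rw [mul_comm (pq (n+r))]; ring
  rw [Finset.sum_congr rfl term, ← Finset.mul_sum, al_sum, Us_eq, ← beta_eq]


/-- Slater's Bailey pair C(1): `α₀ = 1`, `α_{2n} = (−1)ⁿ q^{n(3n−1)}(1+q^{2n})`,
`α_{2n+1} = 0`, `β_n = 1/((q;q)_n (q;q²)_n)` is a Bailey pair relative to `a = 1`. -/
theorem bailey_pair_C1 :
    IsBaileyPair
      (fun k =>
        if k = 0 then 1
        else if k % 2 = 1 then 0
        else (-1 : PowerSeries ℚ) ^ (k / 2) *
          (PowerSeries.X : PowerSeries ℚ) ^ ((k / 2) * (3 * (k / 2) - 1)) *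
          (1 + (PowerSeries.X : PowerSeries ℚ) ^ k))
      (fun n => (pq n * pq2 n)⁻¹) := by
  intro n
  exact bailey_pair_C1' n
end
end

section
/- The pair (α_n, β_n) with α_0 = 1, α_{2n} = (−1)^n q^{n(n−1)}(1+q^{2n}) for n ≥ 1, α_{2n+1} = 0, and β_n = q^{n(n−1)/2}/((q;q)_n (q;q²)_n) is a Bailey pair relative to a = 1; that is, β_n = ∑_{r=0}^{n} α_r / ((q;q)_{n+r} (q;q)_{n−r}) for all n ≥ 0. -/
open Finset PowerSeries
open scoped Classical

noncomputable section

namespace C5aux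

abbrev K := LaurentSeries ℚ

def φ : PowerSeries ℚ →+* K := (HahnSeries.ofPowerSeries ℤ ℚ : PowerSeries ℚ →+* K)

lemma φ_inj : Function.Injective φ := HahnSeries.ofPowerSeries_injective

def Q : K := φ PowerSeries.X

lemma one_sub_Q_pow_ne (j : ℕ) (hj : 1 ≤ j) : (1 : K) - Q ^ j ≠ 0 := by
  have h : (1 : K) - Q ^ j = φ (1 - PowerSeries.X ^ j) := by
    simp [Q, map_sub, map_pow, map_one]
  rw [h]
  intro hc
  have : (1 - PowerSeries.X ^ j : PowerSeries ℚ) = 0 := φ_inj (by simpa using hc)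
  have hcc := congrArg ((PowerSeries.constantCoeff (R := ℚ))) this
  simp [PowerSeries.constantCoeff_X, zero_pow (by omega : j ≠ 0)] at hcc

def F (k : ℕ) : K := ∏ j ∈ Finset.range k, (1 - Q ^ (j + 1))

lemma F_ne (k : ℕ) : F k ≠ 0 := by
  refine Finset.prod_ne_zero_iff.2 fun j _ => one_sub_Q_pow_ne _ (by omega)

lemma F_zero : F 0 = 1 := by simp [F]

lemma F_succ (k : ℕ) : F (k + 1) = F k * (1 - Q ^ (k + 1)) := Finset.prod_range_succ _ _

def gb (m k : ℕ) : K := if k ≤ m then F m / (F k * F (m - k)) else 0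

lemma gb_eq {m k : ℕ} (h : k ≤ m) : gb m k = F m / (F k * F (m - k)) := if_pos h

lemma gb_zero {m k : ℕ} (h : m < k) : gb m k = 0 := if_neg (by omega)

lemma gb_self (m : ℕ) : gb m m = 1 := by
  rw [gb_eq le_rfl]; simp [F_zero]
  exact F_ne m

lemma gb_zero' (m : ℕ) : gb m 0 = 1 := by
  rw [gb_eq (Nat.zero_le m)]; simp [F_zero]
  exact F_ne m

lemma gb_symm {m k : ℕ} (h : k ≤ m) : gb m k = gb m (m - k) := by
  rw [gb_eq h, gb_eq (by omega)]
  have : m - (m - k) = k := by omega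
  rw [this, mul_comm]

def gbZ (m : ℕ) (j : ℤ) : K := if 0 ≤ j then gb m j.toNat else 0

lemma gbZ_ofNat (m k : ℕ) : gbZ m k = gb m k := by simp [gbZ]

lemma gbZ_neg {m : ℕ} {j : ℤ} (h : j < 0) : gbZ m j = 0 := if_neg (by omega)

lemma gbZ_big {m : ℕ} {j : ℤ} (h : (m : ℤ) < j) : gbZ m j = 0 := by
  rw [gbZ, if_pos (by omega)]
  exact gb_zero (by omega)

lemma gbZ_bounds {m : ℕ} {j : ℤ} (h : gbZ m j ≠ 0) : 0 ≤ j ∧ j ≤ m := by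
  constructor
  · by_contra hc; exact h (gbZ_neg (by omega))
  · by_contra hc; exact h (gbZ_big (by omega))

lemma gbZ_symm (m : ℕ) (j : ℤ) : gbZ m j = gbZ m ((m : ℤ) - j) := by
  rcases lt_or_ge j 0 with h | h
  · rw [gbZ_neg h, gbZ_big (by omega)]
  rcases le_or_gt j m with h2 | h2
  · rw [gbZ, if_pos h, gbZ, if_pos (by omega)]
    have hk : j.toNat ≤ m := by omega
    have : ((m : ℤ) - j).toNat = m - j.toNat := by omega
    rw [this]
    exact gb_symm hk
  · rw [gbZ_big h2, gbZ_neg (by omega)]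

lemma Q_ne : Q ≠ 0 := by
  intro h
  have : (PowerSeries.X : PowerSeries ℚ) = 0 := φ_inj (by simpa [Q] using h)
  exact PowerSeries.X_ne_zero this


lemma key1 (a b c u v : K) (hb : b ≠ 0) (hc : c ≠ 0) (hu : 1 - u ≠ 0) (hv : 1 - v ≠ 0) :
    a * (1 - u * v) / (b * (1 - u) * (c * (1 - v)))
      = a / (b * (1 - u) * c) + v * (a / (b * (c * (1 - v)))) := by
  field_simp
  ring

lemma key2 (a b c u v : K) (hb : b ≠ 0) (hc : c ≠ 0) (hu : 1 - u ≠ 0) (hv : 1 - v ≠ 0) :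
    a * (1 - u * v) / (b * (1 - u) * (c * (1 - v)))
      = u * (a / (b * (1 - u) * c)) + a / (b * (c * (1 - v))) := by
  field_simp
  ring

/-- Pascal recurrence 1, valid for all integer `j`. -/
lemma pascal1 (m : ℕ) (j : ℤ) :
    gbZ (m + 1) j = gbZ m j + Q ^ ((m : ℤ) + 1 - j) * gbZ m (j - 1) := by
  rcases lt_or_ge j 0 with h | h
  · rw [gbZ_neg h, gbZ_neg h, gbZ_neg (by omega), mul_zero, add_zero]
  rcases eq_or_lt_of_le h with h0 | h0
  · rw [← h0]
    have z1 : gbZ (m+1) 0 = 1 := by simp [gbZ, gb_zero']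
    have z2 : gbZ m 0 = 1 := by simp [gbZ, gb_zero']
    rw [z1, z2, gbZ_neg (show (0:ℤ) - 1 < 0 by norm_num)]
    simp
  -- j ≥ 1
  obtain ⟨k, rfl⟩ : ∃ k : ℕ, j = (k : ℤ) + 1 := ⟨(j - 1).toNat, by omega⟩
  have e1 : ((k : ℤ) + 1) = ((k + 1 : ℕ) : ℤ) := by push_cast; ring
  rw [e1]
  have e2 : (((k + 1 : ℕ) : ℤ) - 1) = ((k : ℕ) : ℤ) := by push_cast; ring
  rw [e2, gbZ_ofNat, gbZ_ofNat, gbZ_ofNat]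
  rcases le_or_gt (k + 1) m with hk | hk
  · -- main case: k + 1 ≤ m
    have hexp : ((m : ℤ) + 1 - ((k+1 : ℕ) : ℤ)) = ((m - k : ℕ) : ℤ) := by push_cast; omega
    rw [hexp, zpow_natCast]
    rw [gb_eq (by omega), gb_eq hk, gb_eq (by omega)]
    have hm1 : F (m + 1) = F m * (1 - Q ^ (k + 1) * Q ^ (m - k)) := by
      rw [F_succ]
      congr 2
      rw [← pow_add]; congr 1; omega
    have hmk : F (m - k) = F (m - (k+1)) * (1 - Q ^ (m - k)) := by
      have h' : m - k = (m - (k + 1)) + 1 := by omega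
      rw [h', F_succ, ← h']
    have hsub : m + 1 - (k + 1) = m - k := by omega
    rw [hsub, hm1, hmk, F_succ k]
    exact key1 (F m) (F k) (F (m - (k+1))) (Q ^ (k+1)) (Q ^ (m - k)) (F_ne k)
      (F_ne _) (one_sub_Q_pow_ne _ (by omega)) (one_sub_Q_pow_ne _ (by omega))
  · -- out of range: k + 1 > m
    rcases eq_or_lt_of_le (show m ≤ k by omega) with rfl | hmk
    · -- k = m : 1 = 0 + Q^0 * 1
      have : ((m:ℤ) + 1 - ((m+1:ℕ):ℤ)) = 0 := by push_cast; ring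
      rw [this, gb_self, gb_zero (by omega), gb_self]
      norm_num
    · rw [gb_zero (by omega), gb_zero (by omega), gb_zero (by omega)]
      simp

/-- Pascal recurrence 2, valid for all integer `j`. -/
lemma pascal2 (m : ℕ) (j : ℤ) :
    gbZ (m + 1) j = Q ^ j * gbZ m j + gbZ m (j - 1) := by
  rcases lt_or_ge j 0 with h | h
  · rw [gbZ_neg h, gbZ_neg h, gbZ_neg (by omega), mul_zero, add_zero]
  rcases eq_or_lt_of_le h with h0 | h0
  · rw [← h0]
    have z1 : gbZ (m+1) 0 = 1 := by simp [gbZ, gb_zero']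
    have z2 : gbZ m 0 = 1 := by simp [gbZ, gb_zero']
    rw [z1, z2, gbZ_neg (show (0:ℤ) - 1 < 0 by norm_num)]
    simp
  obtain ⟨k, rfl⟩ : ∃ k : ℕ, j = (k : ℤ) + 1 := ⟨(j - 1).toNat, by omega⟩
  have e1 : ((k : ℤ) + 1) = ((k + 1 : ℕ) : ℤ) := by push_cast; ring
  rw [e1]
  have e2 : (((k + 1 : ℕ) : ℤ) - 1) = ((k : ℕ) : ℤ) := by push_cast; ring
  rw [e2, gbZ_ofNat, gbZ_ofNat, gbZ_ofNat, zpow_natCast]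
  rcases le_or_gt (k + 1) m with hk | hk
  · rw [gb_eq (by omega), gb_eq hk, gb_eq (by omega)]
    have hm1 : F (m + 1) = F m * (1 - Q ^ (k + 1) * Q ^ (m - k)) := by
      rw [F_succ]
      congr 2
      rw [← pow_add]; congr 1; omega
    have hmk : F (m - k) = F (m - (k+1)) * (1 - Q ^ (m - k)) := by
      have h' : m - k = (m - (k + 1)) + 1 := by omega
      rw [h', F_succ, ← h']
    have hsub : m + 1 - (k + 1) = m - k := by omega
    rw [hsub, hm1, hmk, F_succ k]
    exact key2 (F m) (F k) (F (m - (k+1))) (Q ^ (k+1)) (Q ^ (m - k)) (F_ne k)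
      (F_ne _) (one_sub_Q_pow_ne _ (by omega)) (one_sub_Q_pow_ne _ (by omega))
  · rcases eq_or_lt_of_le (show m ≤ k by omega) with rfl | hmk
    · rw [gb_self, gb_zero (by omega), gb_self]
      norm_num
    · rw [gb_zero (by omega), gb_zero (by omega), gb_zero (by omega)]
      simp


/-! ### Signs and weights -/

def ε (k : ℤ) : K := (-1 : K) ^ k

lemma ε_mul_self (k : ℤ) : ε k * ε k = 1 := by
  rw [ε, ← mul_zpow]; norm_num

lemma ε_neg (k : ℤ) : ε (-k) = ε k := by
  rw [ε, ε, zpow_neg]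
  exact inv_eq_of_mul_eq_one_left (ε_mul_self k)

lemma ε_add_one (k : ℤ) : ε (k + 1) = -ε k := by
  rw [ε, ε, zpow_add_one₀ (by norm_num : (-1 : K) ≠ 0)]
  ring

lemma Qz (a b : ℤ) : Q ^ a * Q ^ b = Q ^ (a + b) := (zpow_add₀ Q_ne a b).symm

def w (k : ℤ) : K := ε k * Q ^ (k ^ 2 - k)

lemma w_neg (k : ℤ) : w (-k) = ε k * Q ^ (k ^ 2 + k) := by
  rw [w, ε_neg]
  congr 1
  congr 1
  ring

def fA (n : ℕ) (k : ℤ) : K := w k * gbZ (2 * n) ((n : ℤ) - 2 * k)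
def fB (n : ℕ) (k : ℤ) : K := w k * gbZ (2 * n + 1) ((n : ℤ) + 1 - 2 * k)
def fD (n : ℕ) (k : ℤ) : K := w k * gbZ (2 * n) ((n : ℤ) - 2 * k - 1)

def A (n : ℕ) : K := ∑ᶠ k, fA n k
def B (n : ℕ) : K := ∑ᶠ k, fB n k
def D (n : ℕ) : K := ∑ᶠ k, fD n k

lemma supp_gen {f : ℤ → K} {m : ℕ} {t : ℤ → ℤ} {N : ℤ}
    (hf : ∀ k, gbZ m (t k) = 0 → f k = 0)
    (ht : ∀ k, 0 ≤ t k → t k ≤ (m : ℤ) → -N ≤ k ∧ k ≤ N) :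
    Function.support f ⊆ ↑(Finset.Icc (-N) N) := by
  intro k hk
  simp only [Function.mem_support] at hk
  have hgb : gbZ m (t k) ≠ 0 := fun h0 => hk (hf k h0)
  have hb := gbZ_bounds hgb
  have := ht k hb.1 hb.2
  simp only [Finset.coe_Icc, Set.mem_Icc]
  exact this

lemma fA_supp (n : ℕ) :
    Function.support (fA n) ⊆ ↑(Finset.Icc (-((n : ℤ) + 1)) ((n : ℤ) + 1)) := by
  refine supp_gen (m := 2 * n) (t := fun k => (n : ℤ) - 2 * k)
    (fun k h => by simp [fA, h]) (fun k h1 h2 => by push_cast at h1 h2 ⊢; omega)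

lemma fB_supp (n : ℕ) :
    Function.support (fB n) ⊆ ↑(Finset.Icc (-((n : ℤ) + 1)) ((n : ℤ) + 1)) := by
  refine supp_gen (m := 2 * n + 1) (t := fun k => (n : ℤ) + 1 - 2 * k)
    (fun k h => by simp [fB, h]) (fun k h1 h2 => by push_cast at h1 h2 ⊢; omega)

lemma fD_supp (n : ℕ) :
    Function.support (fD n) ⊆ ↑(Finset.Icc (-((n : ℤ) + 1)) ((n : ℤ) + 1)) := by
  refine supp_gen (m := 2 * n) (t := fun k => (n : ℤ) - 2 * k - 1)
    (fun k h => by simp [fD, h]) (fun k h1 h2 => by push_cast at h1 h2 ⊢; omega)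

lemma fA_fin (n : ℕ) : (Function.support (fA n)).Finite :=
  Set.Finite.subset (Finset.finite_toSet _) (fA_supp n)
lemma fB_fin (n : ℕ) : (Function.support (fB n)).Finite :=
  Set.Finite.subset (Finset.finite_toSet _) (fB_supp n)
lemma fD_fin (n : ℕ) : (Function.support (fD n)).Finite :=
  Set.Finite.subset (Finset.finite_toSet _) (fD_supp n)


/-! ### Structural relations -/

lemma S1 (n : ℕ) : A (n + 1) = (1 + Q ^ ((n : ℤ) + 1)) * B n := by
  classical
  set g : ℤ → K :=
    fun k => w k * (Q ^ ((n : ℤ) + 1 + 2 * k) * gbZ (2 * n + 1) ((n : ℤ) - 2 * k)) with hg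
  have hgfin : (Function.support g).Finite := by
    refine Set.Finite.subset (Finset.finite_toSet (Finset.Icc (-((n:ℤ)+1)) ((n:ℤ)+1))) ?_
    refine supp_gen (m := 2 * n + 1) (t := fun k => (n : ℤ) - 2 * k)
      (fun k h => by simp [hg, h]) (fun k h1 h2 => by push_cast at h1 h2 ⊢; omega)
  have hsplit : ∀ k, fA (n + 1) k = fB n k + g k := by
    intro k
    rw [fA]
    have hm : 2 * (n + 1) = (2 * n + 1) + 1 := by ring
    rw [hm]
    have hcast : (((n + 1 : ℕ)) : ℤ) - 2 * k = ((n : ℤ) + 1 - 2 * k) := by push_cast; ring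
    rw [hcast, pascal1 (2 * n + 1) ((n : ℤ) + 1 - 2 * k), mul_add]
    congr 1
    have he : ((2 * n + 1 : ℕ) : ℤ) + 1 - ((n : ℤ) + 1 - 2 * k) = (n : ℤ) + 1 + 2 * k := by
      push_cast; ring
    have hj : ((n : ℤ) + 1 - 2 * k) - 1 = (n : ℤ) - 2 * k := by ring
    rw [he, hj]
  have h1 : A (n + 1) = B n + ∑ᶠ k, g k := by
    rw [A, finsum_congr hsplit]
    exact finsum_add_distrib (fB_fin n) hgfin
  have h2 : ∀ k : ℤ, g (-k) = Q ^ ((n : ℤ) + 1) * fB n k := by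
    intro k
    rw [hg]
    simp only []
    rw [w_neg]
    have hsym : gbZ (2 * n + 1) ((n : ℤ) - 2 * (-k)) = gbZ (2 * n + 1) ((n : ℤ) + 1 - 2 * k) := by
      rw [gbZ_symm]
      congr 1
      push_cast
      ring
    rw [hsym]
    have e1 : Q ^ ((k : ℤ) ^ 2 + k) * Q ^ ((n : ℤ) + 1 + 2 * (-k))
        = Q ^ ((n : ℤ) + 1) * Q ^ (k ^ 2 - k) := by
      rw [Qz, Qz]; congr 1; ring
    rw [fB, w]
    linear_combination (ε k * gbZ (2 * n + 1) ((n : ℤ) + 1 - 2 * k)) * e1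
  have h3 : ∑ᶠ k, g k = Q ^ ((n : ℤ) + 1) * B n := by
    rw [← finsum_comp_equiv (Equiv.neg ℤ)]
    have : ∀ k : ℤ, g ((Equiv.neg ℤ) k) = Q ^ ((n : ℤ) + 1) * fB n k := fun k => h2 k
    rw [finsum_congr this]
    rw [B, mul_finsum _ _]
  rw [h1, h3]
  ring


lemma S2 (n : ℕ) : B n = A n - Q ^ ((n : ℤ) - 1) * D n := by
  classical
  set g : ℤ → K :=
    fun k => w k * (Q ^ ((n : ℤ) + 1 - 2 * k) * gbZ (2 * n) ((n : ℤ) + 1 - 2 * k)) with hg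
  have hgfin : (Function.support g).Finite := by
    refine Set.Finite.subset (Finset.finite_toSet (Finset.Icc (-((n:ℤ)+1)) ((n:ℤ)+1))) ?_
    refine supp_gen (m := 2 * n) (t := fun k => (n : ℤ) + 1 - 2 * k)
      (fun k h => by simp [hg, h]) (fun k h1 h2 => by push_cast at h1 h2 ⊢; omega)
  have hsplit : ∀ k, fB n k = fA n k + g k := by
    intro k
    rw [fB, pascal2 (2 * n) ((n : ℤ) + 1 - 2 * k), mul_add]
    have hj : ((n : ℤ) + 1 - 2 * k) - 1 = (n : ℤ) - 2 * k := by ring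
    rw [hj]
    rw [fA]
    ring
  have h1 : B n = A n + ∑ᶠ k, g k := by
    rw [B, finsum_congr hsplit]
    exact finsum_add_distrib (fA_fin n) hgfin
  have h2 : ∀ k : ℤ, g (k + 1) = -(Q ^ ((n : ℤ) - 1) * fD n k) := by
    intro k
    rw [hg]
    simp only []
    have hw : w (k + 1) = -(ε k * Q ^ (k ^ 2 + k)) := by
      rw [w, ε_add_one]
      have : ((k : ℤ) + 1) ^ 2 - (k + 1) = k ^ 2 + k := by ring
      rw [this]
      ring
    rw [hw]
    have hj : (n : ℤ) + 1 - 2 * (k + 1) = (n : ℤ) - 2 * k - 1 := by ring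
    rw [hj, fD, w]
    have e1 : Q ^ ((k : ℤ) ^ 2 + k) * Q ^ ((n : ℤ) - 2 * k - 1)
        = Q ^ ((n : ℤ) - 1) * Q ^ (k ^ 2 - k) := by
      rw [Qz, Qz]; congr 1; ring
    linear_combination (-(ε k * gbZ (2 * n) ((n : ℤ) - 2 * k - 1))) * e1
  have h3 : ∑ᶠ k, g k = -(Q ^ ((n : ℤ) - 1) * D n) := by
    rw [← finsum_comp_equiv (Equiv.addRight (1 : ℤ))]
    have : ∀ k : ℤ, g ((Equiv.addRight (1:ℤ)) k) = -(Q ^ ((n : ℤ) - 1) * fD n k) :=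
      fun k => h2 k
    rw [finsum_congr this, finsum_neg_distrib, D, mul_finsum _ _]
  rw [h1, h3]
  ring

lemma S3 (n : ℕ) : D (n + 1) = A n - Q ^ ((n : ℤ) + 2) * B n := by
  classical
  set p : ℤ → K := fun k => w k * gbZ (2 * n + 1) ((n : ℤ) - 2 * k) with hp
  set r : ℤ → K :=
    fun k => w k * (Q ^ ((n : ℤ) + 2 + 2 * k) * gbZ (2 * n + 1) ((n : ℤ) - 2 * k - 1)) with hr
  have hpfin : (Function.support p).Finite := by
    refine Set.Finite.subset (Finset.finite_toSet (Finset.Icc (-((n:ℤ)+1)) ((n:ℤ)+1))) ?_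
    refine supp_gen (m := 2 * n + 1) (t := fun k => (n : ℤ) - 2 * k)
      (fun k h => by simp [hp, h]) (fun k h1 h2 => by push_cast at h1 h2 ⊢; omega)
  have hrfin : (Function.support r).Finite := by
    refine Set.Finite.subset (Finset.finite_toSet (Finset.Icc (-((n:ℤ)+1)) ((n:ℤ)+1))) ?_
    refine supp_gen (m := 2 * n + 1) (t := fun k => (n : ℤ) - 2 * k - 1)
      (fun k h => by simp [hr, h]) (fun k h1 h2 => by push_cast at h1 h2 ⊢; omega)
  have hsplit : ∀ k, fD (n + 1) k = p k + r k := by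
    intro k
    rw [fD]
    have hm : 2 * (n + 1) = (2 * n + 1) + 1 := by ring
    rw [hm]
    have hcast : (((n + 1 : ℕ)) : ℤ) - 2 * k - 1 = ((n : ℤ) - 2 * k) := by push_cast; ring
    rw [hcast, pascal1 (2 * n + 1) ((n : ℤ) - 2 * k), mul_add]
    congr 1
    have he : ((2 * n + 1 : ℕ) : ℤ) + 1 - ((n : ℤ) - 2 * k) = (n : ℤ) + 2 + 2 * k := by
      push_cast; ring
    rw [he]
  have h1 : D (n + 1) = ∑ᶠ k, p k + ∑ᶠ k, r k := by
    rw [D, finsum_congr hsplit]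
    exact finsum_add_distrib hpfin hrfin
  -- ∑ᶠ r = -(Q^(n+2) * B n)
  have hr2 : ∀ k : ℤ, r (k + -1) = -(Q ^ ((n : ℤ) + 2) * fB n k) := by
    intro k
    rw [hr]
    simp only []
    have hw : w (k + -1) = -(ε k * Q ^ (k ^ 2 - 3 * k + 2)) := by
      rw [w]
      have hε : ε (k + -1) = -ε k := by
        have := ε_add_one (k + -1)
        simp only [add_assoc] at this
        norm_num at this
        rw [this]  -- ε k = -ε (k + -1)
        ring
      rw [hε]
      have : ((k : ℤ) + -1) ^ 2 - (k + -1) = k ^ 2 - 3 * k + 2 := by ring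
      rw [this]
      ring
    rw [hw]
    have hj : (n : ℤ) - 2 * (k + -1) - 1 = (n : ℤ) + 1 - 2 * k := by ring
    have he : (n : ℤ) + 2 + 2 * (k + -1) = (n : ℤ) + 2 * k := by ring
    rw [hj, he, fB, w]
    have e1 : Q ^ ((k : ℤ) ^ 2 - 3 * k + 2) * Q ^ ((n : ℤ) + 2 * k)
        = Q ^ ((n : ℤ) + 2) * Q ^ (k ^ 2 - k) := by
      rw [Qz, Qz]; congr 1; ring
    linear_combination (-(ε k * gbZ (2 * n + 1) ((n : ℤ) + 1 - 2 * k))) * e1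
  have hrsum : ∑ᶠ k, r k = -(Q ^ ((n : ℤ) + 2) * B n) := by
    rw [← finsum_comp_equiv (Equiv.addRight (-1 : ℤ))]
    have : ∀ k : ℤ, r ((Equiv.addRight (-1:ℤ)) k) = -(Q ^ ((n : ℤ) + 2) * fB n k) :=
      fun k => hr2 k
    rw [finsum_congr this, finsum_neg_distrib, B, mul_finsum _ _]
  -- ∑ᶠ p = A n
  set c : ℤ → K :=
    fun k => ε k * Q ^ (k ^ 2 - k + ((n : ℤ) + 1)) * gbZ (2 * n) ((n : ℤ) + 1 - 2 * k) with hc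
  set d : ℤ → K := fun k => ε k * Q ^ (k ^ 2 + k) * gbZ (2 * n) ((n : ℤ) - 2 * k) with hd
  have hcfin : (Function.support c).Finite := by
    refine Set.Finite.subset (Finset.finite_toSet (Finset.Icc (-((n:ℤ)+1)) ((n:ℤ)+1))) ?_
    refine supp_gen (m := 2 * n) (t := fun k => (n : ℤ) + 1 - 2 * k)
      (fun k h => by simp [hc, h]) (fun k h1 h2 => by push_cast at h1 h2 ⊢; omega)
  have hdfin : (Function.support d).Finite := by
    refine Set.Finite.subset (Finset.finite_toSet (Finset.Icc (-((n:ℤ)+1)) ((n:ℤ)+1))) ?_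
    refine supp_gen (m := 2 * n) (t := fun k => (n : ℤ) - 2 * k)
      (fun k h => by simp [hd, h]) (fun k h1 h2 => by push_cast at h1 h2 ⊢; omega)
  have hp2 : ∀ k : ℤ, p (-k) = c k + d k := by
    intro k
    rw [hp]
    simp only []
    rw [w_neg]
    have hsym : gbZ (2 * n + 1) ((n : ℤ) - 2 * (-k)) = gbZ (2 * n + 1) ((n : ℤ) + 1 - 2 * k) := by
      rw [gbZ_symm]
      congr 1
      push_cast
      ring
    rw [hsym, pascal2 (2 * n) ((n : ℤ) + 1 - 2 * k), mul_add, hc, hd]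
    have hj : ((n : ℤ) + 1 - 2 * k) - 1 = (n : ℤ) - 2 * k := by ring
    rw [hj]
    congr 1
    have e1 : Q ^ ((k : ℤ) ^ 2 + k) * Q ^ ((n : ℤ) + 1 - 2 * k)
        = Q ^ ((k : ℤ) ^ 2 - k + ((n : ℤ) + 1)) := by
      rw [Qz]; congr 1; ring
    linear_combination (ε k * gbZ (2 * n) ((n : ℤ) + 1 - 2 * k)) * e1
  -- ∑ᶠ d = A n
  have hd2 : ∀ k : ℤ, d (-k) = fA n k := by
    intro k
    rw [hd]
    simp only []
    rw [ε_neg]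
    have hsym : gbZ (2 * n) ((n : ℤ) - 2 * (-k)) = gbZ (2 * n) ((n : ℤ) - 2 * k) := by
      rw [gbZ_symm]
      congr 1
      push_cast
      ring
    rw [hsym, fA, w]
    congr 2
    congr 1
    ring
  have hdsum : ∑ᶠ k, d k = A n := by
    rw [← finsum_comp_equiv (Equiv.neg ℤ)]
    have : ∀ k : ℤ, d ((Equiv.neg ℤ) k) = fA n k := fun k => hd2 k
    rw [finsum_congr this, A]
  -- ∑ᶠ c = 0 via h
  set h : ℤ → K := fun k => ε k * Q ^ (k ^ 2 + k) * gbZ (2 * n) ((n : ℤ) - 2 * k - 1) with hh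
  have hhfin : (Function.support h).Finite := by
    refine Set.Finite.subset (Finset.finite_toSet (Finset.Icc (-((n:ℤ)+1)) ((n:ℤ)+1))) ?_
    refine supp_gen (m := 2 * n) (t := fun k => (n : ℤ) - 2 * k - 1)
      (fun k h' => by simp [hh, h']) (fun k h1 h2 => by push_cast at h1 h2 ⊢; omega)
  have hc2 : ∀ k : ℤ, c (k + 1) = -(Q ^ ((n : ℤ) + 1) * h k) := by
    intro k
    rw [hc, hh]
    simp only []
    rw [ε_add_one]
    have hj : (n : ℤ) + 1 - 2 * (k + 1) = (n : ℤ) - 2 * k - 1 := by ring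
    rw [hj]
    have e1 : Q ^ (((k : ℤ) + 1) ^ 2 - (k + 1) + ((n : ℤ) + 1))
        = Q ^ ((n : ℤ) + 1) * Q ^ ((k : ℤ) ^ 2 + k) := by
      rw [Qz]; congr 1; ring
    linear_combination (-(ε k * gbZ (2 * n) ((n : ℤ) - 2 * k - 1))) * e1
  have hH : (∑ᶠ k, h k) = 0 := by
    have heq : ∀ k : ℤ, h (-k - 1) = -h k := by
      intro k
      rw [hh]
      simp only []
      have hε : ε (-k - 1) = -ε k := by
        have h1 : (-k - 1 : ℤ) = -(k + 1) := by ring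
        rw [h1, ε_neg, ε_add_one]
      rw [hε]
      have he : ((-k - 1 : ℤ)) ^ 2 + (-k - 1) = k ^ 2 + k := by ring
      rw [he]
      have hsym : gbZ (2 * n) ((n : ℤ) - 2 * (-k - 1) - 1) = gbZ (2 * n) ((n : ℤ) - 2 * k - 1) := by
        rw [gbZ_symm]
        congr 1
        push_cast
        ring
      rw [hsym]
      ring
    let e : ℤ ≃ ℤ := ⟨fun k => -k - 1, fun k => -k - 1, fun k => by show -(-k - 1) - 1 = k; ring, fun k => by show -(-k - 1) - 1 = k; ring⟩
    have h1 : ∑ᶠ k, h k = ∑ᶠ k, h (e k) := (finsum_comp_equiv e).symm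
    have h2 : ∑ᶠ k, h (e k) = -∑ᶠ k, h k := by
      have : ∀ k : ℤ, h (e k) = -h k := fun k => by
        show h (-k - 1) = -h k
        exact heq k
      rw [finsum_congr this, finsum_neg_distrib]
    have hHH : (∑ᶠ k, h k) = -∑ᶠ k, h k := h1.trans h2
    have h2K : (2 : K) ≠ 0 := by
      intro hc
      have hφ : φ (2 : PowerSeries ℚ) = φ 0 := by
        rw [map_ofNat, map_zero]
        exact_mod_cast hc
      have h2 : (2 : PowerSeries ℚ) = 0 := φ_inj hφ
      have := congrArg ((PowerSeries.constantCoeff (R := ℚ))) h2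
      rw [map_ofNat, map_zero] at this
      norm_num at this
    have hmul : (2 : K) * ∑ᶠ k, h k = 0 := by linear_combination hHH
    rcases mul_eq_zero.1 hmul with h' | h'
    · exact absurd h' h2K
    · exact h'
  have hcsum : ∑ᶠ k, c k = 0 := by
    rw [← finsum_comp_equiv (Equiv.addRight (1 : ℤ))]
    have : ∀ k : ℤ, c ((Equiv.addRight (1:ℤ)) k) = -(Q ^ ((n : ℤ) + 1) * h k) :=
      fun k => hc2 k
    rw [finsum_congr this, finsum_neg_distrib, ← mul_finsum _ _, hH, mul_zero, neg_zero]
  have hpsum : ∑ᶠ k, p k = A n := by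
    rw [← finsum_comp_equiv (Equiv.neg ℤ)]
    have : ∀ k : ℤ, p ((Equiv.neg ℤ) k) = c k + d k := fun k => hp2 k
    rw [finsum_congr this, finsum_add_distrib hcfin hdfin, hcsum, hdsum, zero_add]
  rw [h1, hpsum, hrsum]
  ring


/-! ### Base cases and closed forms -/

lemma A_zero : A 0 = 1 := by
  rw [A, finsum_eq_single _ (0 : ℤ)]
  · rw [fA]
    norm_num
    rw [w]
    have h0 : gbZ (2 * 0) ((0:ℤ) - 2 * 0) = 1 := by
      norm_num [gbZ, gb_zero']
    norm_num at h0 ⊢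
    rw [h0, ε]
    norm_num
  · intro k hk
    rw [fA]
    push_cast
    have : gbZ (2 * 0) ((0 : ℤ) - 2 * k) = 0 := by
      rcases lt_or_ge k 0 with h | h
      · exact gbZ_big (by push_cast; omega)
      · exact gbZ_neg (by omega)
    rw [this, mul_zero]

lemma D_zero : D 0 = 0 := by
  rw [D]
  have : ∀ k : ℤ, fD 0 k = 0 := by
    intro k
    rw [fD]
    push_cast
    have : gbZ (2 * 0) ((0 : ℤ) - 2 * k - 1) = 0 := by
      rcases lt_or_ge k 0 with h | h
      · exact gbZ_big (by push_cast; omega)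
      · exact gbZ_neg (by omega)
    rw [this, mul_zero]
  rw [finsum_congr this, finsum_zero]

def Pi' (n : ℕ) : K := ∏ j ∈ Finset.range n, (1 + Q ^ (j + 1))

def eZ (n : ℕ) : ℤ := ((n * (n - 1) / 2 : ℕ) : ℤ)

lemma eZ_succ (n : ℕ) : eZ (n + 1) = eZ n + n := by
  rw [eZ, eZ]
  have h1 : (n + 1) * (n + 1 - 1) = n * (n - 1) + n * 2 := by
    cases n with
    | zero => rfl
    | succ m => simp only [Nat.add_sub_cancel]; ring
  rw [h1, Nat.add_mul_div_right _ _ (by norm_num : 0 < 2)]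
  push_cast
  ring

lemma main (n : ℕ) :
    A n = Q ^ eZ n * Pi' n ∧
      Q ^ ((n : ℤ) - 1) * D n = Q ^ eZ n * (1 - Q ^ (n : ℤ)) * Pi' n := by
  induction n with
  | zero =>
    constructor
    · rw [A_zero]
      norm_num [eZ, Pi']
    · rw [D_zero]
      norm_num
  | succ n ih =>
    obtain ⟨hA, hD⟩ := ih
    have hB : B n = Q ^ eZ (n + 1) * Pi' n := by
      rw [S2 n, hA]
      have e1 : Q ^ eZ n * Q ^ (n : ℤ) = Q ^ eZ (n + 1) := by
        rw [Qz, eZ_succ]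
      linear_combination -hD + Pi' n * e1
    have hPi : Pi' (n + 1) = Pi' n * (1 + Q ^ ((n : ℤ) + 1)) := by
      rw [Pi', Finset.prod_range_succ, ← Pi']
      have hz : Q ^ ((n : ℤ) + 1) = Q ^ (n + 1 : ℕ) := by
        rw [← zpow_natCast]
        congr 1
      rw [hz]
    constructor
    · rw [S1 n, hB, hPi]
      ring
    · rw [S3 n, hA, hB]
      have hc : ((n + 1 : ℕ) : ℤ) = (n : ℤ) + 1 := by push_cast; ring
      rw [hc]
      have e2 : Q ^ ((n : ℤ) + 1 - 1) = Q ^ (n : ℤ) := by congr 1; ring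
      rw [e2, hPi]
      have e3 : Q ^ (n : ℤ) * Q ^ eZ n = Q ^ eZ (n + 1) := by rw [Qz]; rw [eZ_succ]; congr 1; ring
      have e4 : Q ^ (n : ℤ) * (Q ^ ((n : ℤ) + 2) * Q ^ eZ (n + 1))
          = Q ^ eZ (n + 1) * (Q ^ ((n : ℤ) + 1) * Q ^ ((n : ℤ) + 1)) := by
        rw [Qz, Qz, Qz, Qz]
        congr 1
        ring
      linear_combination Pi' n * e3 - Pi' n * e4
    

/-! ### Folding the symmetric sum -/

def bφ (r : ℕ) : K :=
  if r = 0 then 1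
  else if r % 2 = 1 then 0
  else (-1 : K) ^ (r / 2) * Q ^ ((r / 2) * (r / 2 - 1)) * (1 + Q ^ r)

lemma bφ_fold (k : ℕ) (hk : 1 ≤ k) (G : K) :
    bφ (2 * k) * G = ε k * Q ^ ((k : ℤ) ^ 2 - k) * G + ε k * Q ^ ((k : ℤ) ^ 2 + k) * G := by
  rw [bφ, if_neg (by omega), if_neg (by omega)]
  have h2 : 2 * k / 2 = k := by omega
  rw [h2]
  have hε : (-1 : K) ^ k = ε (k : ℤ) := by rw [ε, zpow_natCast]
  have hq1 : Q ^ (k * (k - 1)) = Q ^ ((k : ℤ) ^ 2 - k) := by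
    rw [← zpow_natCast]
    congr 1
    have : ((k * (k - 1) : ℕ) : ℤ) = (k : ℤ) * ((k : ℤ) - 1) := by
      push_cast [Nat.cast_sub hk]
      ring
    rw [this]; ring
  have hq2 : Q ^ (2 * k) = Q ^ ((2 * k : ℕ) : ℤ) := by rw [zpow_natCast]
  rw [hε, hq1, hq2]
  have e1 : Q ^ ((k : ℤ) ^ 2 - k) * Q ^ ((2 * k : ℕ) : ℤ) = Q ^ ((k : ℤ) ^ 2 + k) := by
    rw [Qz]
    congr 1
    push_cast
    ring
  linear_combination (ε k * G) * e1

lemma fold (n : ℕ) :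
    ∑ r ∈ Finset.range (n + 1), bφ r * gbZ (2 * n) ((n : ℤ) - r) = A n := by
  classical
  set N : ℤ := (n : ℤ) + 1 with hN
  -- A n as a Finset sum
  have hA : A n = ∑ k ∈ Finset.Icc (-N) N, fA n k :=
    finsum_eq_sum_of_support_subset _ (fA_supp n)
  -- split the interval
  have hsplit : Finset.Icc (-N) N = Finset.Icc (-N) (-1) ∪ Finset.Icc 0 N := by
    ext k
    simp only [Finset.mem_union, Finset.mem_Icc]
    omega
  have hdisj : Disjoint (Finset.Icc (-N) (-1)) (Finset.Icc 0 N) := by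
    rw [Finset.disjoint_left]
    intro a ha hb
    simp only [Finset.mem_Icc] at ha hb
    omega
  have h0N : Finset.Icc (0 : ℤ) N = insert 0 (Finset.Icc 1 N) := by
    ext k
    simp only [Finset.mem_insert, Finset.mem_Icc]
    omega
  have hneg : ∑ k ∈ Finset.Icc (-N) (-1), fA n k = ∑ k ∈ Finset.Icc 1 N, fA n (-k) := by
    refine Finset.sum_nbij' (fun k => -k) (fun k => -k) ?_ ?_ ?_ ?_ ?_ <;>
      intros <;> simp_all [Finset.mem_Icc] <;> omega
  have hA2 : A n = fA n 0 + ∑ k ∈ Finset.Icc 1 N, (fA n k + fA n (-k)) := by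
    rw [hA, hsplit, Finset.sum_union hdisj, hneg, h0N,
      Finset.sum_insert (by simp), Finset.sum_add_distrib]
    ring
  -- extend the range sum
  have hext : ∑ r ∈ Finset.range (n + 1), bφ r * gbZ (2 * n) ((n : ℤ) - r)
      = ∑ r ∈ Finset.range (2 * n + 3), bφ r * gbZ (2 * n) ((n : ℤ) - r) := by
    refine Finset.sum_subset (by intro r hr; simp only [Finset.mem_range] at hr ⊢; omega) ?_
    intro r hr hr2
    simp only [Finset.mem_range] at hr hr2
    have : gbZ (2 * n) ((n : ℤ) - r) = 0 := gbZ_neg (by omega)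
    rw [this, mul_zero]
  -- drop odd terms, reindex evens
  have hodd : ∑ r ∈ Finset.range (2 * n + 3), bφ r * gbZ (2 * n) ((n : ℤ) - r)
      = ∑ k ∈ Finset.range (n + 2), bφ (2 * k) * gbZ (2 * n) ((n : ℤ) - 2 * k) := by
    rw [← Finset.sum_filter_add_sum_filter_not (Finset.range (2 * n + 3)) (fun r => r % 2 = 0)]
    have hz : ∑ r ∈ (Finset.range (2 * n + 3)).filter (fun r => ¬ r % 2 = 0),
        bφ r * gbZ (2 * n) ((n : ℤ) - r) = 0 := by
      refine Finset.sum_eq_zero ?_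
      intro r hr
      simp only [Finset.mem_filter, Finset.mem_range] at hr
      rw [bφ, if_neg (by omega), if_pos (by omega), zero_mul]
    rw [hz, add_zero]
    refine Finset.sum_nbij' (fun r => r / 2) (fun k => 2 * k) ?_ ?_ ?_ ?_ ?_
    · intro a ha
      simp only [Finset.mem_filter, Finset.mem_range] at ha
      simp only [Finset.mem_range]
      omega
    · intro a ha
      simp only [Finset.mem_range] at ha
      simp only [Finset.mem_filter, Finset.mem_range]
      omega
    · intro a ha
      simp only [Finset.mem_filter, Finset.mem_range] at ha
      omega
    · intro a ha
      omega
    · intro a ha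
      simp only [Finset.mem_filter, Finset.mem_range] at ha
      rw [show 2 * (a / 2) = a from by omega,
        show ((n : ℤ) - 2 * ((a / 2 : ℕ) : ℤ)) = ((n : ℤ) - (a : ℤ)) from by omega]
  -- peel off k = 0 and match
  have hr0 : Finset.range (n + 2) = insert 0 (Finset.Icc 1 (n + 1)) := by
    ext k
    simp only [Finset.mem_insert, Finset.mem_Icc, Finset.mem_range]
    omega
  rw [hext, hodd, hr0, Finset.sum_insert (by simp)]
  have hk0 : bφ (2 * 0) * gbZ (2 * n) ((n : ℤ) - 2 * ((0 : ℕ) : ℤ)) = fA n 0 := by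
    norm_num [bφ, fA, w, ε]
  have hmatch : ∑ k ∈ Finset.Icc 1 (n + 1), bφ (2 * k) * gbZ (2 * n) ((n : ℤ) - 2 * k)
      = ∑ k ∈ Finset.Icc 1 N, (fA n k + fA n (-k)) := by
    rw [show Finset.Icc (1:ℤ) N = Finset.map ⟨Nat.cast, Nat.cast_injective⟩ (Finset.Icc 1 (n+1))
      from ?_]
    · rw [Finset.sum_map]
      refine Finset.sum_congr rfl ?_
      intro k hk
      simp only [Finset.mem_Icc] at hk
      simp only [Function.Embedding.coeFn_mk]
      have hGs : gbZ (2 * n) ((n : ℤ) - 2 * (-(k : ℤ))) = gbZ (2 * n) ((n : ℤ) - 2 * k) := by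
        rw [gbZ_symm]
        congr 1
        push_cast
        ring
      rw [fA, fA, w_neg, w, hGs]
      have hb := bφ_fold k hk.1 (gbZ (2 * n) ((n : ℤ) - 2 * (k : ℤ)))
      rw [show ((n : ℤ) - 2 * (k : ℕ)) = ((n : ℤ) - 2 * ((k : ℕ) : ℤ)) from by push_cast; ring]
      linear_combination hb
    · ext a
      simp only [Finset.mem_map, Finset.mem_Icc, Function.Embedding.coeFn_mk]
      constructor
      · intro ha
        exact ⟨a.toNat, by omega, by omega⟩
      · rintro ⟨b, hb, rfl⟩
        omega
  rw [hk0, hmatch, hA2]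

/-! ### The product identity -/

def F2K (n : ℕ) : K := ∏ j ∈ Finset.range n, (1 - Q ^ (2 * j + 1))

lemma F2K_ne (n : ℕ) : F2K n ≠ 0 :=
  Finset.prod_ne_zero_iff.2 fun j _ => one_sub_Q_pow_ne _ (by omega)

lemma one_add_Q_pow_ne (m : ℕ) (hm : 1 ≤ m) : (1 : K) + Q ^ m ≠ 0 := by
  have h : (1 : K) + Q ^ m = φ (1 + PowerSeries.X ^ m) := by
    simp [Q, map_add, map_pow, map_one]
  rw [h]
  intro hc
  have : (1 + PowerSeries.X ^ m : PowerSeries ℚ) = 0 := φ_inj (by simpa using hc)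
  have hcc := congrArg ((PowerSeries.constantCoeff (R := ℚ))) this
  simp [zero_pow (by omega : m ≠ 0)] at hcc

lemma Pi'_ne (n : ℕ) : Pi' n ≠ 0 :=
  Finset.prod_ne_zero_iff.2 fun j _ => one_add_Q_pow_ne _ (by omega)

lemma L6 (n : ℕ) : F (2 * n) = F n * F2K n * Pi' n := by
  induction n with
  | zero => simp [F, F2K, Pi']
  | succ n ih =>
    have h2 : 2 * (n + 1) = (2 * n + 1) + 1 := by ring
    have hPi : Pi' (n + 1) = Pi' n * (1 + Q ^ (n + 1)) := Finset.prod_range_succ _ n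
    have hF2K : F2K (n + 1) = F2K n * (1 - Q ^ (2 * n + 1)) := Finset.prod_range_succ _ n
    have hsq : (1 : K) - Q ^ (2 * n + 1 + 1) = (1 - Q ^ (n + 1)) * (1 + Q ^ (n + 1)) := by
      have : Q ^ (2 * n + 1 + 1) = Q ^ (n + 1) * Q ^ (n + 1) := by
        rw [← pow_add]
        congr 1
        ring
      rw [this]
      ring
    rw [h2, F_succ, F_succ, ih, hPi, hF2K, hsq, F_succ]
    ring

/-! ### Final identity in K -/

lemma final_K (n : ℕ) :
    Q ^ (n * (n - 1) / 2) * (F n * F2K n)⁻¹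
      = ∑ r ∈ Finset.range (n + 1), bφ r * (F (n + r) * F (n - r))⁻¹ := by
  have hterm : ∀ r, r ≤ n → (F (n + r) * F (n - r))⁻¹
      = gbZ (2 * n) ((n : ℤ) - r) * (F (2 * n))⁻¹ := by
    intro r hr
    have h1 : gbZ (2 * n) ((n : ℤ) - r) = gb (2 * n) (n - r) := by
      rw [show ((n : ℤ) - r) = ((n - r : ℕ) : ℤ) from by omega, gbZ_ofNat]
    have h2 : 2 * n - (n - r) = n + r := by omega
    have h3 := F_ne (n + r)
    have h4 := F_ne (n - r)
    have h5 := F_ne (2 * n)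
    rw [h1, gb_eq (by omega), h2]
    field_simp
  have hsum : ∑ r ∈ Finset.range (n + 1), bφ r * (F (n + r) * F (n - r))⁻¹
      = (∑ r ∈ Finset.range (n + 1), bφ r * gbZ (2 * n) ((n : ℤ) - r)) * (F (2 * n))⁻¹ := by
    rw [Finset.sum_mul]
    refine Finset.sum_congr rfl ?_
    intro r hr
    simp only [Finset.mem_range] at hr
    rw [hterm r (by omega), mul_assoc]
  rw [hsum, fold]
  have hAn : A n = Q ^ (n * (n - 1) / 2) * Pi' n := by
    rw [(main n).1, eZ, zpow_natCast]
  rw [hAn, L6]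
  rw [mul_inv, mul_inv]
  field_simp [F_ne, F2K_ne, Pi'_ne]


/-! ### Glue with power series -/

lemma cc_one_sub_X_pow (m : ℕ) (hm : 1 ≤ m) :
    (PowerSeries.constantCoeff (R := ℚ)) (1 - PowerSeries.X ^ m) = 1 := by
  rw [map_sub, map_one, map_pow, PowerSeries.constantCoeff_X, zero_pow (by omega : m ≠ 0)]
  ring

lemma cc_pq (k : ℕ) : (PowerSeries.constantCoeff (R := ℚ)) (pq k) = 1 := by
  rw [pq, map_prod]
  refine Finset.prod_eq_one fun j _ => cc_one_sub_X_pow _ (by omega)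

lemma cc_pq2 (k : ℕ) : (PowerSeries.constantCoeff (R := ℚ)) (pq2 k) = 1 := by
  rw [pq2, map_prod]
  refine Finset.prod_eq_one fun j _ => cc_one_sub_X_pow _ (by omega)

lemma φ_pq (k : ℕ) : φ (pq k) = F k := by
  rw [pq, F, map_prod]
  refine Finset.prod_congr rfl fun j _ => ?_
  rw [map_sub, map_one, map_pow]
  rfl

lemma φ_pq2 (k : ℕ) : φ (pq2 k) = F2K k := by
  rw [pq2, F2K, map_prod]
  refine Finset.prod_congr rfl fun j _ => ?_
  rw [map_sub, map_one, map_pow]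
  rfl

lemma φ_inv (u : PowerSeries ℚ) (h : (PowerSeries.constantCoeff (R := ℚ)) u ≠ 0) :
    φ u⁻¹ = (φ u)⁻¹ := by
  have h1 : u * u⁻¹ = 1 := PowerSeries.mul_inv_cancel u h
  have h2 : φ u * φ u⁻¹ = 1 := by rw [← map_mul, h1, map_one]
  exact eq_inv_of_mul_eq_one_left (by rw [mul_comm] at h2; exact h2)

lemma φ_inv_pq_pq (a b : ℕ) : φ ((pq a * pq b)⁻¹) = (F a * F b)⁻¹ := by
  rw [φ_inv _ (by rw [map_mul, cc_pq, cc_pq]; norm_num), map_mul, φ_pq, φ_pq]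

lemma φ_inv_pq_pq2 (a b : ℕ) : φ ((pq a * pq2 b)⁻¹) = (F a * F2K b)⁻¹ := by
  rw [φ_inv _ (by rw [map_mul, cc_pq, cc_pq2]; norm_num), map_mul, φ_pq, φ_pq2]

lemma φ_alpha (r : ℕ) :
    φ (if r = 0 then 1
       else if r % 2 = 1 then 0
       else (-1 : PowerSeries ℚ) ^ (r / 2) *
         (PowerSeries.X : PowerSeries ℚ) ^ ((r / 2) * (r / 2 - 1)) *
         (1 + (PowerSeries.X : PowerSeries ℚ) ^ r)) = bφ r := by
  rw [bφ]
  by_cases h0 : r = 0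
  · simp [h0]
  · rw [if_neg h0, if_neg h0]
    by_cases h1 : r % 2 = 1
    · simp [h1]
    · rw [if_neg h1, if_neg h1]
      rw [map_mul, map_mul, map_pow, map_neg, map_one, map_pow, map_add, map_one, map_pow]
      rfl

end C5aux

/-- Slater's Bailey pair C(5): `α₀ = 1`, `α_{2n} = (−1)ⁿ q^{n(n−1)}(1+q^{2n})`,
`α_{2n+1} = 0`, `β_n = q^{n(n−1)/2}/((q;q)_n (q;q²)_n)` is a Bailey pair
relative to `a = 1`. -/
theorem bailey_pair_C5 :
    IsBaileyPair
      (fun k =>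
        if k = 0 then 1
        else if k % 2 = 1 then 0
        else (-1 : PowerSeries ℚ) ^ (k / 2) *
          (PowerSeries.X : PowerSeries ℚ) ^ ((k / 2) * (k / 2 - 1)) *
          (1 + (PowerSeries.X : PowerSeries ℚ) ^ k))
      (fun n => (PowerSeries.X : PowerSeries ℚ) ^ (n * (n - 1) / 2) *
        (pq n * pq2 n)⁻¹) := by
  intro n
  dsimp only
  apply C5aux.φ_inj
  rw [map_mul, map_pow, map_sum]
  rw [C5aux.φ_inv_pq_pq2]
  have hterms : ∀ r ∈ Finset.range (n + 1),
      C5aux.φ ((if r = 0 then 1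
        else if r % 2 = 1 then 0
        else (-1 : PowerSeries ℚ) ^ (r / 2) *
          (PowerSeries.X : PowerSeries ℚ) ^ ((r / 2) * (r / 2 - 1)) *
          (1 + (PowerSeries.X : PowerSeries ℚ) ^ r)) * (pq (n + r) * pq (n - r))⁻¹)
      = C5aux.bφ r * (C5aux.F (n + r) * C5aux.F (n - r))⁻¹ := by
    intro r _
    rw [map_mul, C5aux.φ_alpha, C5aux.φ_inv_pq_pq]
  rw [Finset.sum_congr rfl hterms]
  have hX : C5aux.φ PowerSeries.X = C5aux.Q := rfl
  rw [hX]
  exact C5aux.final_K n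
end
end
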